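/- Let n be a positive integer. The set {(A, x) ∈ ℝ^{n×n} × ℝ^n : det([x, Ax, A²x, …, A^{n−1}x]) = 0}, where [x, Ax, …, A^{n−1}x] denotes the n×n matrix whose columns are x, Ax, …, A^{n−1}x, has Lebesgue measure zero in ℝ^{n×(n+1)}. -/

import Mathlib

open Matrix MeasureTheory

theorem mv_null (m : ℕ) (p : MvPolynomial (Fin m) ℝ) (hp : p ≠ 0) :
    volume {x : Fin m → ℝ | MvPolynomial.eval x p = 0} = 0 := by
  induction m with
  | zero =>
    obtain ⟨a, rfl⟩ := MvPolynomial.C_surjective (Fin 0) p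
    have ha : a ≠ 0 := fun h => hp (by simp [h])
    have h : {x : Fin 0 → ℝ | MvPolynomial.eval x (MvPolynomial.C a) = 0} = ∅ := by
      ext x; simp [ha]
    rw [h]; simp
  | succ m ih =>
    set q := MvPolynomial.finSuccEquiv ℝ m p with hqdef
    have hq0 : q ≠ 0 := by
      intro h
      exact hp ((MvPolynomial.finSuccEquiv ℝ m).injective (by simp [← hqdef, h]))
    have hcoeff : q.coeff q.natDegree ≠ 0 := by
      simpa [Polynomial.coeff_natDegree] using Polynomial.leadingCoeff_ne_zero.mpr hq0
    set N := {y : Fin m → ℝ | MvPolynomial.eval y (q.coeff q.natDegree) = 0} with hNdef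
    have hN : volume N = 0 := ih _ hcoeff
    have hNmeas : MeasurableSet N :=
      (isClosed_eq (MvPolynomial.continuous_eval _) continuous_const).measurableSet
    -- the key evaluation identity
    have key : ∀ x : Fin (m + 1) → ℝ, MvPolynomial.eval x p =
        Polynomial.eval (x 0) (Polynomial.map (MvPolynomial.eval (Fin.tail x)) q) := by
      intro x
      have := MvPolynomial.eval_eq_eval_mv_eval' (Fin.tail x) (x 0) p
      rwa [Fin.cons_self_tail] at this
    set T : Set (ℝ × (Fin m → ℝ)) :=
      {z | Polynomial.eval z.1 (Polynomial.map (MvPolynomial.eval z.2) q) = 0} with hTdef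
    have hTmeas : MeasurableSet T := by
      have hc : Continuous fun z : ℝ × (Fin m → ℝ) =>
          Polynomial.eval z.1 (Polynomial.map (MvPolynomial.eval z.2) q) := by
        have : (fun z : ℝ × (Fin m → ℝ) =>
            Polynomial.eval z.1 (Polynomial.map (MvPolynomial.eval z.2) q))
            = fun z => MvPolynomial.eval (Fin.cons z.1 z.2) p := by
          funext z
          rw [key (Fin.cons z.1 z.2)]
          simp [Fin.tail_cons]
        rw [this]
        exact (MvPolynomial.continuous_eval _).comp
          (continuous_pi fun i => by
            refine Fin.cases ?_ ?_ i
            · simpa using continuous_fst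
            · intro j; simp; exact (continuous_apply j).comp continuous_snd)
      exact (isClosed_eq hc continuous_const).measurableSet
    -- transfer along piFinSuccAbove
    let e := MeasurableEquiv.piFinSuccAbove (fun _ : Fin (m + 1) => ℝ) 0
    have he : MeasurePreserving e volume volume :=
      volume_preserving_piFinSuccAbove (fun _ : Fin (m + 1) => ℝ) 0
    have hpre : {x : Fin (m + 1) → ℝ | MvPolynomial.eval x p = 0} = e ⁻¹' T := by
      ext x
      simp only [Set.mem_setOf_eq, Set.mem_preimage, hTdef, e,
        MeasurableEquiv.piFinSuccAbove_apply, Fin.insertNthEquiv_symm_apply, Fin.removeNth_zero]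
      rw [key x]
    rw [hpre, ← MeasurableEquiv.map_apply e T, he.map_eq]
    -- split T
    have hsub : T ⊆ (Set.univ ×ˢ N) ∪ (T ∩ {z | z.2 ∉ N}) := by
      intro z hz
      by_cases h : z.2 ∈ N
      · exact Or.inl ⟨trivial, h⟩
      · exact Or.inr ⟨hz, h⟩
    refine measure_mono_null hsub (measure_union_null ?_ ?_)
    · rw [Measure.volume_eq_prod, Measure.prod_prod, hN, mul_zero]
    · have hmeas2 : MeasurableSet (T ∩ {z | z.2 ∉ N}) :=
        hTmeas.inter ((hNmeas.preimage measurable_snd).compl)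
      rw [Measure.volume_eq_prod, ← Measure.prod_swap, Measure.map_apply measurable_swap hmeas2]
      rw [Measure.measure_prod_null (measurable_swap hmeas2)]
      refine Filter.Eventually.of_forall fun y => ?_
      simp only [Pi.zero_apply]
      by_cases hy : y ∈ N
      · have hempty : (Prod.mk y ⁻¹' (Prod.swap ⁻¹' (T ∩ {z | z.2 ∉ N}))) = ∅ := by
          ext a
          simp only [Set.mem_preimage, Prod.swap_prod_mk, Set.mem_inter_iff,
            Set.mem_setOf_eq, Set.mem_empty_iff_false, iff_false, not_and, not_not]
          exact fun _ => hy
        rw [hempty]; exact measure_empty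
      · have hqy : Polynomial.map (MvPolynomial.eval y) q ≠ 0 := by
          intro h
          apply hy
          have := congrArg (fun r => Polynomial.coeff r q.natDegree) h
          simpa [Polynomial.coeff_map, hNdef] using this
        refine measure_mono_null ?_ ((Polynomial.finite_setOf_isRoot hqy).measure_zero _)
        intro a ha
        simp only [Set.mem_preimage, Prod.swap_prod_mk, Set.mem_inter_iff,
          Set.mem_setOf_eq] at ha
        exact ha.1

theorem mv_null' (σ : Type*) [Fintype σ] (p : MvPolynomial σ ℝ) (hp : p ≠ 0) :
    volume {x : σ → ℝ | MvPolynomial.eval x p = 0} = 0 := by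
  classical
  let e : σ ≃ Fin (Fintype.card σ) := Fintype.equivFin σ
  set p' : MvPolynomial (Fin (Fintype.card σ)) ℝ := MvPolynomial.rename e p with hp'def
  have hp' : p' ≠ 0 := fun h => hp (MvPolynomial.rename_injective e e.injective (by simp [← hp'def, h]))
  let E : (Fin (Fintype.card σ) → ℝ) ≃ᵐ (σ → ℝ) :=
    MeasurableEquiv.piCongrLeft (fun _ : σ => ℝ) e.symm
  have hE : MeasurePreserving E volume volume :=
    volume_measurePreserving_piCongrLeft (fun _ : σ => ℝ) e.symm
  rw [← hE.map_eq, MeasurableEquiv.map_apply]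
  have : E ⁻¹' {x : σ → ℝ | MvPolynomial.eval x p = 0}
      = {y : Fin (Fintype.card σ) → ℝ | MvPolynomial.eval y p' = 0} := by
    ext y
    simp only [Set.mem_preimage, Set.mem_setOf_eq, hp'def, MvPolynomial.eval_rename]
    have hEy : (E y : σ → ℝ) = y ∘ e := by
      funext s
      simp [E, MeasurableEquiv.piCongrLeft, Equiv.piCongrLeft]
    rw [hEy]
  rw [this]
  exact mv_null _ _ hp'

noncomputable def curryME (n : ℕ) : ((Fin n × Fin n) → ℝ) ≃ᵐ (Fin n → Fin n → ℝ) where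
  toEquiv := Equiv.curry (Fin n) (Fin n) ℝ
  measurable_toFun :=
    measurable_pi_lambda _ fun i => measurable_pi_lambda _ fun j => measurable_pi_apply (i, j)
  measurable_invFun :=
    measurable_pi_lambda _ fun pr => (measurable_pi_apply pr.2).comp (measurable_pi_apply pr.1)

theorem curryME_mp (n : ℕ) : MeasurePreserving (curryME n) volume volume := by
  have hsymm : MeasurePreserving (curryME n).symm volume volume := by
    constructor
    · exact (curryME n).symm.measurable
    · symm
      refine Measure.pi_eq (μ := fun _ : Fin n × Fin n => (volume : Measure ℝ)) fun s hs => ?_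
      rw [MeasurableEquiv.map_apply]
      have : (curryME n).symm ⁻¹' (Set.univ.pi s)
          = Set.univ.pi fun i => Set.univ.pi fun j => s (i, j) := by
        ext g
        simp only [Set.mem_preimage, Set.mem_pi, Set.mem_univ, true_implies, curryME,
          MeasurableEquiv.symm, MeasurableEquiv.coe_mk, Equiv.curry, Equiv.coe_fn_symm_mk]
        constructor
        · intro h i j; exact h (i, j)
        · intro h pr; exact h pr.1 pr.2
      rw [this, volume_pi_pi]
      simp_rw [volume_pi_pi]
      exact (Fintype.prod_prod_type fun pr => volume (s pr)).symm
  have h2 := hsymm.symm ((curryME n).symm)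
  rwa [MeasurableEquiv.symm_symm] at h2

/-- The set of pairs `(A, x)` whose Krylov matrix `[x, Ax, …, A^(n-1) x]` is singular
has Lebesgue measure zero. -/
theorem stmt_13 (n : ℕ) (hn : 0 < n) :
    volume {p : (Fin n → Fin n → ℝ) × (Fin n → ℝ) |
      (Matrix.of fun i j : Fin n => ((Matrix.of p.1 ^ (j : ℕ)) *ᵥ p.2) i).det = 0} = 0 := by
  classical
  haveI : NeZero n := ⟨hn.ne'⟩
  let E1 := MeasurableEquiv.sumPiEquivProdPi (fun _ : (Fin n × Fin n) ⊕ Fin n => ℝ)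
  let E : (((Fin n × Fin n) ⊕ Fin n) → ℝ) ≃ᵐ (Fin n → Fin n → ℝ) × (Fin n → ℝ) :=
    E1.trans ((curryME n).prodCongr (MeasurableEquiv.refl (Fin n → ℝ)))
  have hE : MeasurePreserving E volume volume := by
    have h1 : MeasurePreserving E1 volume volume :=
      volume_measurePreserving_sumPiEquivProdPi (fun _ : (Fin n × Fin n) ⊕ Fin n => ℝ)
    have h2 : MeasurePreserving (Prod.map (curryME n) (id : (Fin n → ℝ) → (Fin n → ℝ)))
        (volume.prod volume) (volume.prod volume) :=
      (curryME_mp n).prod (MeasurePreserving.id _)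
    have hcoe : ⇑E = (Prod.map (curryME n) id) ∘ ⇑E1 := rfl
    rw [hcoe]
    exact h2.comp h1
  -- the universal Krylov determinant polynomial
  let Aσ : Matrix (Fin n) (Fin n) (MvPolynomial ((Fin n × Fin n) ⊕ Fin n) ℝ) :=
    Matrix.of fun i j => MvPolynomial.X (Sum.inl (i, j))
  let xσ : Fin n → MvPolynomial ((Fin n × Fin n) ⊕ Fin n) ℝ := fun i => MvPolynomial.X (Sum.inr i)
  let P : MvPolynomial ((Fin n × Fin n) ⊕ Fin n) ℝ :=
    (Matrix.of fun i j : Fin n => ((Aσ ^ (j : ℕ)) *ᵥ xσ) i).det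
  have heval : ∀ z : ((Fin n × Fin n) ⊕ Fin n) → ℝ, MvPolynomial.eval z P =
      (Matrix.of fun i j : Fin n =>
        ((Matrix.of (fun i j : Fin n => z (Sum.inl (i, j))) ^ (j : ℕ)) *ᵥ
          (fun i => z (Sum.inr i))) i).det := by
    intro z
    have h1 : MvPolynomial.eval z P
        = ((Matrix.of fun i j : Fin n => ((Aσ ^ (j : ℕ)) *ᵥ xσ) i).map
            (MvPolynomial.eval z)).det := RingHom.map_det _ _
    rw [h1]
    congr 1
    ext i j
    have hpow : (Aσ ^ (j : ℕ)).map (MvPolynomial.eval z)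
        = (Matrix.of fun i j : Fin n => z (Sum.inl (i, j))) ^ (j : ℕ) := by
      have h := map_pow ((MvPolynomial.eval z).mapMatrix) Aσ (j : ℕ)
      simp only [RingHom.mapMatrix_apply] at h
      rw [h]
      congr 1
      ext a b
      simp [Aσ]
    calc (MvPolynomial.eval z) (((Aσ ^ (j : ℕ)) *ᵥ xσ) i)
        = ∑ k, (MvPolynomial.eval z) ((Aσ ^ (j : ℕ)) i k) * (MvPolynomial.eval z) (xσ k) := by
          simp [Matrix.mulVec, dotProduct, map_sum, _root_.map_mul]
      _ = ∑ k, ((Matrix.of fun i j : Fin n => z (Sum.inl (i, j))) ^ (j : ℕ)) i k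
            * z (Sum.inr k) := by
          refine Finset.sum_congr rfl fun k _ => ?_
          rw [← hpow]
          simp [xσ, Matrix.map_apply]
      _ = _ := by simp [Matrix.mulVec, dotProduct]
  -- nonvanishing at a cyclic shift
  open Fin.NatCast in
  have hP : P ≠ 0 := by
    intro h0
    set A₀ : Matrix (Fin n) (Fin n) ℝ := Matrix.of fun i j => if i = j + 1 then 1 else 0 with hA₀
    set x₀ : Fin n → ℝ := fun i => if i = 0 then 1 else 0 with hx₀
    have hk : ∀ k : ℕ, (A₀ ^ k) *ᵥ x₀ = fun i => if i = (k : Fin n) then 1 else 0 := by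
      intro k
      induction k with
      | zero => funext i; simp [Matrix.one_mulVec, x₀]
      | succ k ih =>
        rw [pow_succ', ← Matrix.mulVec_mulVec, ih]
        funext i
        simp only [Matrix.mulVec, dotProduct, hA₀, Matrix.of_apply, ite_mul, one_mul,
          zero_mul, mul_ite, mul_one, mul_zero]
        rw [Finset.sum_ite_eq' Finset.univ ((k : Fin n)) (fun x => if i = x + 1 then (1:ℝ) else 0)]
        simp [Nat.cast_succ]
    let z₀ : ((Fin n × Fin n) ⊕ Fin n) → ℝ := Sum.elim (fun pr => A₀ pr.1 pr.2) x₀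
    have hz : MvPolynomial.eval z₀ P = 1 := by
      rw [heval z₀]
      have : (Matrix.of fun i j : Fin n =>
          ((Matrix.of (fun i j : Fin n => z₀ (Sum.inl (i, j))) ^ (j : ℕ)) *ᵥ
            (fun i => z₀ (Sum.inr i))) i) = (1 : Matrix (Fin n) (Fin n) ℝ) := by
        ext i j
        have hAz : (Matrix.of fun i j : Fin n => z₀ (Sum.inl (i, j))) = A₀ := rfl
        have hxz : (fun i => z₀ (Sum.inr i)) = x₀ := rfl
        rw [hAz, hxz]
        show ((A₀ ^ (j : ℕ)) *ᵥ x₀) i = _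
        rw [hk (j : ℕ)]
        simp [Matrix.one_apply, Fin.cast_val_eq_self]
      rw [this, Matrix.det_one]
    rw [h0] at hz
    simp at hz
  -- put everything together
  rw [← hE.map_eq, MeasurableEquiv.map_apply]
  have hpre : ⇑E ⁻¹' {p : (Fin n → Fin n → ℝ) × (Fin n → ℝ) |
      (Matrix.of fun i j : Fin n => ((Matrix.of p.1 ^ (j : ℕ)) *ᵥ p.2) i).det = 0}
      = {z | MvPolynomial.eval z P = 0} := by
    ext z
    simp only [Set.mem_preimage, Set.mem_setOf_eq]
    rw [heval z]
    rfl
  rw [hpre]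
  exact mv_null' _ P hP
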